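/- arXiv:2003.07192 — 8 statements merged into one kernel-verified Lean document; each statement's English description precedes it below -/
import Mathlib

section
/- At any generalized Nash equilibrium m* of the game induced by the misinformation-filtering mechanism, the government's proposed price equals the price allocated to the government, i.e., p̃₀* = π₀* = (1/N)·Σ_{i∈I} p̃₀^{i*}. -/
open Finset

noncomputable section

namespace MisinfoFilter

/-- A message of a social-media platform: the proposed minimum average trust `ht`,
the proposed prices `pP l` for the filters of the other competing platforms,
the proposed price `pG` for the government's lower bound, the proposed filters `a k`
for the competing platforms and the proposed lower bound `aG` for the government. -/
structure PlatformMsg (N : ℕ) where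
  ht : ℝ
  pP : Fin N → ℝ
  pG : ℝ
  a : Fin N → ℝ
  aG : ℝ

/-- The government's message: a proposed price `pG` and a proposed lower bound `aG`. -/
structure GovMsg where
  pG : ℝ
  aG : ℝ

/-- A message profile: one message per platform and one for the government. -/
structure Profile (N : ℕ) where
  pf : Fin N → PlatformMsg N
  gov : GovMsg

/-- Validity of a platform message: nonnegative proposed trust and prices. -/
def PlatformMsg.Valid {N : ℕ} (msg : PlatformMsg N) : Prop :=
  0 ≤ msg.ht ∧ (∀ l, 0 ≤ msg.pP l) ∧ 0 ≤ msg.pG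

/-- Validity of a government message: nonnegative proposed price. -/
def GovMsg.Valid (g : GovMsg) : Prop := 0 ≤ g.pG

/-- Unilateral deviation of platform `i` to message `msg`. -/
def Profile.updPf {N : ℕ} (m : Profile N) (i : Fin N) (msg : PlatformMsg N) : Profile N :=
  ⟨Function.update m.pf i msg, m.gov⟩

/-- Unilateral deviation of the government to message `g`. -/
def Profile.updGov {N : ℕ} (m : Profile N) (g : GovMsg) : Profile N :=
  ⟨m.pf, g⟩

/-- The data of the misinformation-filtering game: `N ≥ 1` platforms, competing sets
`C i ∋ i` with `|C i| ≥ 3` and symmetric competition, user fractions `n` (positive,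
summing to one), average trust functions `h i`, valuations `v i` (each depending only on
the coordinates in `C i`), the government's valuation `v0` and budget `b0 ≥ 0`. -/
structure Framework (N : ℕ) where
  hN : 1 ≤ N
  C : Fin N → Finset (Fin N)
  mem_C : ∀ i, i ∈ C i
  card_C : ∀ i, 3 ≤ (C i).card
  symm_C : ∀ i k, i ∈ C k ↔ k ∈ C i
  n : Fin N → ℝ
  n_pos : ∀ i, 0 < n i
  n_sum : ∑ i, n i = 1
  h : Fin N → ℝ → ℝ
  v : Fin N → (Fin N → ℝ) → ℝ
  v_localized : ∀ i p q, (∀ k ∈ C i, p k = q k) → v i p = v i q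
  v0 : ℝ → ℝ
  b0 : ℝ
  b0_nonneg : 0 ≤ b0

namespace Framework

variable {N : ℕ}

/-- Allocated filter `α_i(m)`: the average of proposals for `i` by the platforms in `C i`. -/
def alpha (F : Framework N) (m : Profile N) (i : Fin N) : ℝ :=
  (∑ k ∈ F.C i, (m.pf k).a i) / ((F.C i).card : ℝ)

/-- Allocated lower bound `α₀(m)`: the average of all proposed lower bounds. -/
def alpha0 (F : Framework N) (m : Profile N) : ℝ :=
  (m.gov.aG + ∑ k, (m.pf k).aG) / ((N : ℝ) + 1)

/-- `Σ_k n_k · h̃_k`. -/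
def trustSum (F : Framework N) (m : Profile N) : ℝ := ∑ k, F.n k * (m.pf k).ht

/-- Allocated minimum average trust `η_i(m)`. -/
def eta (F : Framework N) (m : Profile N) (i : Fin N) : ℝ :=
  min ((F.n i * (m.pf i).ht / F.trustSum m) * F.alpha0 m) 1

/-- Allocated price `π_target^payer` paid by `payer` per unit of the filter of `target`:
the average of the prices proposed for `target` by the platforms in `C target`
other than `target` and `payer`. -/
def price (F : Framework N) (m : Profile N) (payer target : Fin N) : ℝ :=
  (∑ k ∈ ((F.C target).erase target).erase payer, (m.pf k).pP target) /
    (((F.C target).card : ℝ) - 2)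

/-- Allocated government price `π₀`. -/
def price0 (F : Framework N) (m : Profile N) : ℝ := (∑ i, (m.pf i).pG) / (N : ℝ)

/-- Average proposal `ã_l^{-i}` for platform `l` by the platforms in `C l` other than `i`. -/
def aAvgMinus (F : Framework N) (m : Profile N) (i l : Fin N) : ℝ :=
  (∑ k ∈ (F.C l).erase i, (m.pf k).a l) / (((F.C l).card : ℝ) - 1)

/-- Average proposal `ã₀^{-i}` of lower bounds by all players except platform `i`. -/
def aGAvgMinus (F : Framework N) (m : Profile N) (i : Fin N) : ℝ :=
  (m.gov.aG + ∑ k, (m.pf k).aG - (m.pf i).aG) / (N : ℝ)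

/-- Tax `τ_i(m)` of platform `i`. -/
def tax (F : Framework N) (m : Profile N) (i : Fin N) : ℝ :=
  - m.gov.pG * F.eta m i
  - (∑ l ∈ (F.C i).erase i, F.price m l i) * F.alpha m i
  + ∑ l ∈ (F.C i).erase i, F.price m i l * F.alpha m l
  + (∑ l ∈ (F.C i).erase i, (m.pf i).pP l * ((m.pf i).a l - F.aAvgMinus m i l) ^ 2)
  + (m.pf i).pG * ((m.pf i).aG - F.aGAvgMinus m i) ^ 2

/-- Tax (investment) `τ₀(m)` of the government. -/
def tax0 (F : Framework N) (m : Profile N) : ℝ :=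
  F.price0 m * F.alpha0 m + (m.gov.pG - F.price0 m) ^ 2

/-- Utility of platform `i`. -/
def util (F : Framework N) (m : Profile N) (i : Fin N) : ℝ :=
  F.v i (F.alpha m) - F.tax m i

/-- Utility of the government. -/
def util0 (F : Framework N) (m : Profile N) : ℝ := F.v0 (F.alpha0 m) - F.tax0 m

/-- An admissible message profile: all messages valid and `Σ_k n_k h̃_k > 0`
(profiles with `Σ_k n_k h̃_k = 0` are excluded by the social planner). -/
def ProfileValid (F : Framework N) (m : Profile N) : Prop :=
  (∀ i, (m.pf i).Valid) ∧ m.gov.Valid ∧ 0 < F.trustSum m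

/-- Generalized Nash equilibrium of the induced game: the profile is admissible, every
player's own allocation is feasible, no platform can profit by a unilateral deviation whose
allocated filter stays in its feasible set `S_i`, and the government cannot profit by a
unilateral deviation satisfying its feasibility and budget constraints. -/
def IsGNE (F : Framework N) (m : Profile N) : Prop :=
  F.ProfileValid m ∧
  (∀ i, F.alpha m i ∈ Set.Icc (0:ℝ) 1 ∧ F.eta m i ≤ F.n i * F.h i (F.alpha m i)) ∧
  F.alpha0 m ∈ Set.Icc (0:ℝ) 1 ∧ F.price0 m * F.alpha0 m ≤ F.b0 ∧
  (∀ (i : Fin N) (msg : PlatformMsg N), msg.Valid →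
    0 < F.trustSum (m.updPf i msg) →
    F.alpha (m.updPf i msg) i ∈ Set.Icc (0:ℝ) 1 →
    F.eta (m.updPf i msg) i ≤ F.n i * F.h i (F.alpha (m.updPf i msg) i) →
    F.util (m.updPf i msg) i ≤ F.util m i) ∧
  (∀ g : GovMsg, g.Valid →
    F.alpha0 (m.updGov g) ∈ Set.Icc (0:ℝ) 1 →
    F.price0 (m.updGov g) * F.alpha0 (m.updGov g) ≤ F.b0 →
    F.util0 (m.updGov g) ≤ F.util0 m)

end Framework

/-- The standing regularity assumptions of the model: each `h i` maps `[0,1]` into `[0,1]`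
and is strictly increasing, concave and differentiable; each valuation `v i` is nonnegative,
concave and differentiable on the box, decreasing in the own coordinate and strictly
increasing in the coordinates of the other competing platforms; the government's valuation
`v0` is nonnegative, increasing, concave and differentiable on `[0,1]`. -/
structure Framework.Regular {N : ℕ} (F : Framework N) : Prop where
  h_maps : ∀ i, Set.MapsTo (F.h i) (Set.Icc 0 1) (Set.Icc 0 1)
  h_strictMono : ∀ i, StrictMonoOn (F.h i) (Set.Icc 0 1)
  h_concave : ∀ i, ConcaveOn ℝ (Set.Icc 0 1) (F.h i)
  h_diff : ∀ i, DifferentiableOn ℝ (F.h i) (Set.Icc 0 1)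
  v_nonneg : ∀ i p, (∀ k, p k ∈ Set.Icc (0:ℝ) 1) → 0 ≤ F.v i p
  v_concave : ∀ i, ConcaveOn ℝ {p : Fin N → ℝ | ∀ k, p k ∈ Set.Icc (0:ℝ) 1} (F.v i)
  v_diff : ∀ i, DifferentiableOn ℝ (F.v i) {p : Fin N → ℝ | ∀ k, p k ∈ Set.Icc (0:ℝ) 1}
  v_own_anti : ∀ i p, (∀ k, p k ∈ Set.Icc (0:ℝ) 1) →
    ∀ x y : ℝ, x ∈ Set.Icc (0:ℝ) 1 → y ∈ Set.Icc (0:ℝ) 1 → x ≤ y →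
      F.v i (Function.update p i y) ≤ F.v i (Function.update p i x)
  v_other_strictMono : ∀ i l, l ∈ F.C i → l ≠ i →
    ∀ p, (∀ k, p k ∈ Set.Icc (0:ℝ) 1) →
    ∀ x y : ℝ, x ∈ Set.Icc (0:ℝ) 1 → y ∈ Set.Icc (0:ℝ) 1 → x < y →
      F.v i (Function.update p l x) < F.v i (Function.update p l y)
  v0_nonneg : ∀ x ∈ Set.Icc (0:ℝ) 1, 0 ≤ F.v0 x
  v0_mono : MonotoneOn F.v0 (Set.Icc 0 1)
  v0_concave : ConcaveOn ℝ (Set.Icc 0 1) F.v0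
  v0_diff : DifferentiableOn ℝ F.v0 (Set.Icc 0 1)

end MisinfoFilter

end

namespace MisinfoFilter

/-- At any GNE `m` of the induced game, the government's proposed price
equals the price allocated to the government: `p̃₀* = π₀* = (1/N)·Σ_{i∈I} p̃₀^{i*}`. -/
theorem gov_price_eq_allocated_price_at_GNE {N : ℕ} (F : Framework N) (hreg : F.Regular)
    (m : Profile N) (hm : F.IsGNE m) :
    m.gov.pG = F.price0 m ∧ m.gov.pG = (∑ i, (m.pf i).pG) / (N : ℝ) := by
  obtain ⟨⟨hpf, hgov, htrust⟩, halpha, halpha0, hbudget, hdevPf, hdevGov⟩ := hm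
  -- the deviation message
  set g : GovMsg := ⟨F.price0 m, m.gov.aG⟩ with hg
  have hprice0_nonneg : 0 ≤ F.price0 m := by
    unfold Framework.price0
    apply div_nonneg
    · exact Finset.sum_nonneg fun i _ => (hpf i).2.2
    · exact Nat.cast_nonneg N
  have hvalid : g.Valid := hprice0_nonneg
  have hpf_eq : (m.updGov g).pf = m.pf := rfl
  have halpha0_eq : F.alpha0 (m.updGov g) = F.alpha0 m := rfl
  have hprice0_eq : F.price0 (m.updGov g) = F.price0 m := rfl
  have key := hdevGov g hvalid (by rw [halpha0_eq]; exact halpha0)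
    (by rw [hprice0_eq, halpha0_eq]; exact hbudget)
  have htax : F.tax0 (m.updGov g) = F.price0 m * F.alpha0 m := by
    unfold Framework.tax0
    rw [hprice0_eq, halpha0_eq]
    simp [hg, Profile.updGov]
  have hutil : F.util0 (m.updGov g) = F.v0 (F.alpha0 m) - F.price0 m * F.alpha0 m := by
    unfold Framework.util0
    rw [halpha0_eq, htax]
  have hutilm : F.util0 m = F.v0 (F.alpha0 m) - (F.price0 m * F.alpha0 m
      + (m.gov.pG - F.price0 m) ^ 2) := rfl
  rw [hutil, hutilm] at key
  have hsq : (m.gov.pG - F.price0 m) ^ 2 ≤ 0 := by linarith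
  have : m.gov.pG - F.price0 m = 0 := by
    have := sq_nonneg (m.gov.pG - F.price0 m)
    have h0 : (m.gov.pG - F.price0 m) ^ 2 = 0 := le_antisymm hsq this
    exact pow_eq_zero_iff (by norm_num) |>.mp h0
  have heq : m.gov.pG = F.price0 m := by linarith
  exact ⟨heq, heq⟩

end MisinfoFilter
end

section
/- At any generalized Nash equilibrium m* of the game induced by the misinformation-filtering mechanism, for every platform i ∈ I and every index k ∈ D_{-i} with p̃_k^{i*} ≠ 0, platform i's proposal for k agrees with the average proposal of the others: ã_k^{i*} = ã_k^{−i*} (for k ∈ C_{-i} this is ã_k^{−i} = (1/(|C_k|−1))·Σ_{l∈C_k, l≠i} ã_k^l, and for k = 0 it is ã₀^{−i} = (1/(|J|−1))·Σ_{l∈J, l≠i} ã₀^l). -/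
open Finset

namespace MisinfoFilter

section Aux

variable {N : ℕ} {F : Framework N} {m : Profile N} {i : Fin N} {msg : PlatformMsg N}

lemma alpha_upd (ha : msg.a = (m.pf i).a) (l : Fin N) :
    F.alpha (m.updPf i msg) l = F.alpha m l := by
  unfold Framework.alpha Profile.updPf
  congr 1
  refine Finset.sum_congr rfl fun k _ => ?_
  by_cases hk : k = i
  · subst hk; simp [ha]
  · simp [Function.update_of_ne hk]

lemma trustSum_upd (hht : msg.ht = (m.pf i).ht) :
    F.trustSum (m.updPf i msg) = F.trustSum m := by
  unfold Framework.trustSum Profile.updPf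
  refine Finset.sum_congr rfl fun k _ => ?_
  by_cases hk : k = i
  · subst hk; simp [hht]
  · simp [Function.update_of_ne hk]

lemma alpha0_upd (haG : msg.aG = (m.pf i).aG) :
    F.alpha0 (m.updPf i msg) = F.alpha0 m := by
  unfold Framework.alpha0 Profile.updPf
  congr 1
  congr 1
  refine Finset.sum_congr rfl fun k _ => ?_
  by_cases hk : k = i
  · subst hk; simp [haG]
  · simp [Function.update_of_ne hk]

lemma eta_upd (hht : msg.ht = (m.pf i).ht) (haG : msg.aG = (m.pf i).aG) (j : Fin N) :
    F.eta (m.updPf i msg) j = F.eta m j := by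
  have hj : ((m.updPf i msg).pf j).ht = (m.pf j).ht := by
    show (Function.update m.pf i msg j).ht = (m.pf j).ht
    by_cases hk : j = i
    · subst hk; simp [hht]
    · simp [Function.update_of_ne hk]
  unfold Framework.eta
  rw [trustSum_upd hht, alpha0_upd haG, hj]

lemma price_upd (p t : Fin N) (h : p = i ∨ t = i) :
    F.price (m.updPf i msg) p t = F.price m p t := by
  unfold Framework.price Profile.updPf
  congr 1
  refine Finset.sum_congr rfl fun k hk => ?_
  have hkp : k ≠ p := (Finset.mem_erase.1 hk).1
  have hkt : k ≠ t := (Finset.mem_erase.1 (Finset.mem_of_mem_erase hk)).1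
  have hki : k ≠ i := by rcases h with h | h <;> subst h <;> assumption
  simp [Function.update_of_ne hki]

lemma aAvgMinus_upd (ha : msg.a = (m.pf i).a) (l : Fin N) :
    F.aAvgMinus (m.updPf i msg) i l = F.aAvgMinus m i l := by
  unfold Framework.aAvgMinus Profile.updPf
  congr 1
  refine Finset.sum_congr rfl fun k _ => ?_
  by_cases hk : k = i
  · subst hk; simp [ha]
  · simp [Function.update_of_ne hk]

lemma aGAvgMinus_upd (haG : msg.aG = (m.pf i).aG) :
    F.aGAvgMinus (m.updPf i msg) i = F.aGAvgMinus m i := by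
  unfold Framework.aGAvgMinus Profile.updPf
  congr 1
  have hs : ∑ k, (Function.update m.pf i msg k).aG = ∑ k, (m.pf k).aG := by
    refine Finset.sum_congr rfl fun k _ => ?_
    by_cases hk : k = i
    · subst hk; simp [haG]
    · simp [Function.update_of_ne hk]
  simp [hs, haG]

lemma util_upd (hht : msg.ht = (m.pf i).ht) (ha : msg.a = (m.pf i).a)
    (haG : msg.aG = (m.pf i).aG) :
    F.util (m.updPf i msg) i = F.util m i
      + (∑ l ∈ (F.C i).erase i,
          ((m.pf i).pP l - msg.pP l) * ((m.pf i).a l - F.aAvgMinus m i l) ^ 2)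
      + ((m.pf i).pG - msg.pG) * ((m.pf i).aG - F.aGAvgMinus m i) ^ 2 := by
  have hpfi : (m.updPf i msg).pf i = msg := by
    show Function.update m.pf i msg i = msg
    simp
  have hgov : (m.updPf i msg).gov = m.gov := rfl
  have hv : F.v i (F.alpha (m.updPf i msg)) = F.v i (F.alpha m) := by
    congr 1
    exact funext (alpha_upd ha)
  have hA : ∑ l ∈ (F.C i).erase i, F.price (m.updPf i msg) l i
      = ∑ l ∈ (F.C i).erase i, F.price m l i :=
    Finset.sum_congr rfl fun l _ => price_upd l i (Or.inr rfl)
  have hB : ∑ l ∈ (F.C i).erase i, F.price (m.updPf i msg) i l * F.alpha (m.updPf i msg) l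
      = ∑ l ∈ (F.C i).erase i, F.price m i l * F.alpha m l :=
    Finset.sum_congr rfl fun l _ => by rw [price_upd i l (Or.inl rfl), alpha_upd ha]
  have hC : ∑ l ∈ (F.C i).erase i,
        msg.pP l * ((m.pf i).a l - F.aAvgMinus (m.updPf i msg) i l) ^ 2
      = ∑ l ∈ (F.C i).erase i, msg.pP l * ((m.pf i).a l - F.aAvgMinus m i l) ^ 2 :=
    Finset.sum_congr rfl fun l _ => by rw [aAvgMinus_upd ha]
  have hD : ∑ l ∈ (F.C i).erase i,
        ((m.pf i).pP l - msg.pP l) * ((m.pf i).a l - F.aAvgMinus m i l) ^ 2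
      = (∑ l ∈ (F.C i).erase i, (m.pf i).pP l * ((m.pf i).a l - F.aAvgMinus m i l) ^ 2)
        - ∑ l ∈ (F.C i).erase i, msg.pP l * ((m.pf i).a l - F.aAvgMinus m i l) ^ 2 := by
    rw [← Finset.sum_sub_distrib]
    exact Finset.sum_congr rfl fun l _ => by ring
  unfold Framework.util Framework.tax
  rw [hv, hgov, hpfi, ha, haG, eta_upd hht haG, aGAvgMinus_upd haG, hA, hB, hC,
    alpha_upd ha, hD]
  ring

/-- The key inequality: a deviation changing only the proposed prices cannot be profitable,
hence the removed penalty terms are nonpositive. -/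
lemma penalty_nonpos {N : ℕ} (F : Framework N) (m : Profile N) (hm : F.IsGNE m)
    (i : Fin N) (msg : PlatformMsg N) (hval : msg.Valid)
    (hht : msg.ht = (m.pf i).ht) (ha : msg.a = (m.pf i).a) (haG : msg.aG = (m.pf i).aG) :
    (∑ l ∈ (F.C i).erase i,
        ((m.pf i).pP l - msg.pP l) * ((m.pf i).a l - F.aAvgMinus m i l) ^ 2)
      + ((m.pf i).pG - msg.pG) * ((m.pf i).aG - F.aGAvgMinus m i) ^ 2 ≤ 0 := by
  obtain ⟨hprof, hfeas, _, _, hdev, _⟩ := hm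
  have h1 : F.util (m.updPf i msg) i ≤ F.util m i := by
    refine hdev i msg hval ?_ ?_ ?_
    · rw [trustSum_upd hht]; exact hprof.2.2
    · rw [alpha_upd ha]; exact (hfeas i).1
    · rw [eta_upd hht haG, alpha_upd ha]; exact (hfeas i).2
  have h2 := util_upd (F := F) (m := m) (i := i) (msg := msg) hht ha haG
  linarith [h2 ▸ h1]

end Aux

/-- At any GNE `m`, for every platform `i` and every `k ∈ D_{-i}` with
`p̃_k^{i*} ≠ 0`, platform `i`'s proposal for `k` agrees with the average proposal of the
others: `ã_k^{i*} = ã_k^{-i*}` for `k ∈ C_{-i}`, and `ã₀^{i*} = ã₀^{-i*}` for `k = 0`. -/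
theorem proposal_consistency_at_GNE {N : ℕ} (F : Framework N) (hreg : F.Regular)
    (m : Profile N) (hm : F.IsGNE m) :
    (∀ i k, k ∈ F.C i → k ≠ i → (m.pf i).pP k ≠ 0 →
      (m.pf i).a k = F.aAvgMinus m i k) ∧
    (∀ i, (m.pf i).pG ≠ 0 → (m.pf i).aG = F.aGAvgMinus m i) := by
  have hvalid := hm.1.1
  constructor
  · intro i k hkC hki hpk
    -- deviation: set the price proposed for k to 0
    set msg : PlatformMsg N :=
      { ht := (m.pf i).ht, pP := Function.update (m.pf i).pP k 0,
        pG := (m.pf i).pG, a := (m.pf i).a, aG := (m.pf i).aG } with hmsg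
    have hval : msg.Valid := by
      refine ⟨(hvalid i).1, fun l => ?_, (hvalid i).2.2⟩
      by_cases hl : l = k
      · subst hl; simp [hmsg]
      · simpa [hmsg, Function.update_of_ne hl] using (hvalid i).2.1 l
    have hle := penalty_nonpos F m hm i msg hval rfl rfl rfl
    have hsum : ∑ l ∈ (F.C i).erase i,
        ((m.pf i).pP l - msg.pP l) * ((m.pf i).a l - F.aAvgMinus m i l) ^ 2
        = (m.pf i).pP k * ((m.pf i).a k - F.aAvgMinus m i k) ^ 2 := by
      refine Finset.sum_eq_single_of_mem k (Finset.mem_erase.2 ⟨hki, hkC⟩) ?_ |>.trans ?_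
      · intro l _ hlk
        simp [hmsg, Function.update_of_ne hlk]
      · simp [hmsg]
    have hpGz : ((m.pf i).pG - msg.pG) * ((m.pf i).aG - F.aGAvgMinus m i) ^ 2 = 0 := by
      simp [hmsg]
    rw [hsum, hpGz, add_zero] at hle
    have hp : 0 < (m.pf i).pP k := lt_of_le_of_ne ((hvalid i).2.1 k) (Ne.symm hpk)
    have hw : ((m.pf i).a k - F.aAvgMinus m i k) ^ 2 = 0 := by
      nlinarith [sq_nonneg ((m.pf i).a k - F.aAvgMinus m i k)]
    have := pow_eq_zero_iff (n := 2) (by norm_num) |>.1 hw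
    linarith [sub_eq_zero.1 this]
  · intro i hpG
    set msg : PlatformMsg N :=
      { ht := (m.pf i).ht, pP := (m.pf i).pP,
        pG := 0, a := (m.pf i).a, aG := (m.pf i).aG } with hmsg
    have hval : msg.Valid := ⟨(hvalid i).1, (hvalid i).2.1, le_refl 0⟩
    have hle := penalty_nonpos F m hm i msg hval rfl rfl rfl
    have hsum : ∑ l ∈ (F.C i).erase i,
        ((m.pf i).pP l - msg.pP l) * ((m.pf i).a l - F.aAvgMinus m i l) ^ 2 = 0 := by
      simp [hmsg]
    rw [hsum, zero_add] at hle
    simp only [hmsg, sub_zero] at hle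
    have hp : 0 < (m.pf i).pG := lt_of_le_of_ne (hvalid i).2.2 (Ne.symm hpG)
    have hw : ((m.pf i).aG - F.aGAvgMinus m i) ^ 2 = 0 := by
      nlinarith [sq_nonneg ((m.pf i).aG - F.aGAvgMinus m i)]
    have := pow_eq_zero_iff (n := 2) (by norm_num) |>.1 hw
    linarith [sub_eq_zero.1 this]

end MisinfoFilter
end

section
/- (Budget balance) Let m* be any generalized Nash equilibrium of the game induced by the misinformation-filtering mechanism, and suppose that at m* the minimum in the definition of η_i is not binding, i.e., (n_i·h̃_i* / Σ_{k∈I} n_k·h̃_k*)·α₀(m*) ≤ 1 for every i ∈ I. Then the taxes sum to zero: Σ_{i∈J} τ_i(m*) = 0. -/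
open Finset

namespace MisinfoFilter

private lemma pf_upd_ne {N : ℕ} (m : Profile N) (i : Fin N) (msg : PlatformMsg N)
    {k : Fin N} (hk : k ≠ i) : (m.updPf i msg).pf k = m.pf k := by
  simp [Profile.updPf, Function.update_of_ne hk]

private lemma pf_upd_self {N : ℕ} (m : Profile N) (i : Fin N) (msg : PlatformMsg N) :
    (m.updPf i msg).pf i = msg := by
  simp [Profile.updPf]

/-- **Budget balance.** At any GNE `m` at which the minimum in the definition
of `η_i` is not binding, the taxes of all players sum to zero. -/
theorem budget_balance_at_GNE {N : ℕ} (F : Framework N) (hreg : F.Regular)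
    (m : Profile N) (hm : F.IsGNE m)
    (hmin : ∀ i, (F.n i * (m.pf i).ht / F.trustSum m) * F.alpha0 m ≤ 1) :
    F.tax0 m + ∑ i, F.tax m i = 0 := by
  obtain ⟨⟨hval, hgval, hT⟩, hfeas, hIcc0, hbud, hdevP, hdevG⟩ := hm
  -- Step 1: the quadratic penalty terms vanish at equilibrium.
  have hpen : ∀ i,
      (∑ l ∈ (F.C i).erase i, (m.pf i).pP l * ((m.pf i).a l - F.aAvgMinus m i l) ^ 2)
        + (m.pf i).pG * ((m.pf i).aG - F.aGAvgMinus m i) ^ 2 = 0 := by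
    intro i
    set msg : PlatformMsg N :=
      { ht := (m.pf i).ht, pP := fun _ => 0, pG := 0,
        a := (m.pf i).a, aG := (m.pf i).aG } with hmsg
    set m' := m.updPf i msg with hm'
    have hA : ∀ k, (m'.pf k).a = (m.pf k).a := by
      intro k
      by_cases hk : k = i
      · subst hk; rw [hm', pf_upd_self]
      · rw [hm', pf_upd_ne m i msg hk]
    have hHt : ∀ k, (m'.pf k).ht = (m.pf k).ht := by
      intro k
      by_cases hk : k = i
      · subst hk; rw [hm', pf_upd_self]
      · rw [hm', pf_upd_ne m i msg hk]
    have hAG : ∀ k, (m'.pf k).aG = (m.pf k).aG := by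
      intro k
      by_cases hk : k = i
      · subst hk; rw [hm', pf_upd_self]
      · rw [hm', pf_upd_ne m i msg hk]
    have hgov : m'.gov = m.gov := rfl
    have halpha : F.alpha m' = F.alpha m := by
      funext j
      unfold Framework.alpha
      rw [Finset.sum_congr rfl fun k _ => by rw [hA k]]
    have hTs : F.trustSum m' = F.trustSum m := by
      unfold Framework.trustSum
      exact Finset.sum_congr rfl fun k _ => by rw [hHt k]
    have halpha0 : F.alpha0 m' = F.alpha0 m := by
      unfold Framework.alpha0
      rw [hgov, Finset.sum_congr rfl fun k _ => by rw [hAG k]]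
    have heta : F.eta m' i = F.eta m i := by
      unfold Framework.eta
      rw [hTs, halpha0, hHt i]
    have haAvg : ∀ l, F.aAvgMinus m' i l = F.aAvgMinus m i l := by
      intro l
      unfold Framework.aAvgMinus
      rw [Finset.sum_congr rfl fun k _ => by rw [hA k]]
    have haGAvg : F.aGAvgMinus m' i = F.aGAvgMinus m i := by
      unfold Framework.aGAvgMinus
      rw [hgov, Finset.sum_congr rfl fun k _ => by rw [hAG k], hAG i]
    have hprice_li : ∀ l, F.price m' l i = F.price m l i := by
      intro l
      unfold Framework.price
      refine congrArg (· / _) (Finset.sum_congr rfl fun k hk => ?_)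
      have hki : k ≠ i := (Finset.mem_erase.mp (Finset.mem_of_mem_erase hk)).1
      rw [hm', pf_upd_ne m i msg hki]
    have hprice_il : ∀ l, F.price m' i l = F.price m i l := by
      intro l
      unfold Framework.price
      refine congrArg (· / _) (Finset.sum_congr rfl fun k hk => ?_)
      have hki : k ≠ i := (Finset.mem_erase.mp hk).1
      rw [hm', pf_upd_ne m i msg hki]
    -- tax at the deviated profile
    have htax' : F.tax m' i = - m.gov.pG * F.eta m i
        - (∑ l ∈ (F.C i).erase i, F.price m l i) * F.alpha m i
        + ∑ l ∈ (F.C i).erase i, F.price m i l * F.alpha m l := by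
      unfold Framework.tax
      rw [hgov, heta, halpha, haGAvg, pf_upd_self,
        Finset.sum_congr rfl fun l _ => by rw [hprice_li l],
        Finset.sum_congr rfl (fun l _ => by rw [hprice_il l] :
          ∀ l ∈ (F.C i).erase i, F.price m' i l * F.alpha m l
            = F.price m i l * F.alpha m l)]
      simp [hmsg]
    have htax : F.tax m i = - m.gov.pG * F.eta m i
        - (∑ l ∈ (F.C i).erase i, F.price m l i) * F.alpha m i
        + ∑ l ∈ (F.C i).erase i, F.price m i l * F.alpha m l
        + ((∑ l ∈ (F.C i).erase i, (m.pf i).pP l * ((m.pf i).a l - F.aAvgMinus m i l) ^ 2)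
          + (m.pf i).pG * ((m.pf i).aG - F.aGAvgMinus m i) ^ 2) := by
      unfold Framework.tax; ring
    -- the deviation is admissible, hence unprofitable
    have hvalid' : msg.Valid := ⟨(hval i).1, fun _ => le_refl 0, le_refl 0⟩
    have hle := hdevP i msg hvalid' (hTs ▸ hT)
      (by rw [halpha]; exact (hfeas i).1)
      (by rw [heta, halpha]; exact (hfeas i).2)
    have hle' : F.tax m i ≤ F.tax m' i := by
      unfold Framework.util at hle
      rw [halpha] at hle
      linarith
    have hnn : 0 ≤ (∑ l ∈ (F.C i).erase i,
          (m.pf i).pP l * ((m.pf i).a l - F.aAvgMinus m i l) ^ 2)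
        + (m.pf i).pG * ((m.pf i).aG - F.aGAvgMinus m i) ^ 2 :=
      add_nonneg
        (Finset.sum_nonneg fun l _ => mul_nonneg ((hval i).2.1 l) (sq_nonneg _))
        (mul_nonneg ((hval i).2.2) (sq_nonneg _))
    rw [htax, htax'] at hle'
    linarith
  -- Step 2: the government's price proposal matches the allocated price.
  have hgpG : m.gov.pG = F.price0 m := by
    set g' : GovMsg := ⟨F.price0 m, m.gov.aG⟩ with hg'
    have hvalid' : g'.Valid :=
      div_nonneg (Finset.sum_nonneg fun k _ => (hval k).2.2) (Nat.cast_nonneg N)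
    have ha0 : F.alpha0 (m.updGov g') = F.alpha0 m := rfl
    have hp0 : F.price0 (m.updGov g') = F.price0 m := rfl
    have hle := hdevG g' hvalid' (ha0 ▸ hIcc0) (by rw [hp0, ha0]; exact hbud)
    unfold Framework.util0 Framework.tax0 at hle
    rw [ha0, hp0] at hle
    have h2 : (m.gov.pG - F.price0 m) ^ 2 ≤ 0 := by
      have : (m.updGov g').gov.pG = F.price0 m := rfl
      rw [this] at hle
      nlinarith
    have := le_antisymm h2 (sq_nonneg _)
    have := pow_eq_zero_iff (n := 2) (by norm_num) |>.mp this
    linarith [sub_eq_zero.mp this]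
  -- Step 3: the etas sum to alpha0.
  have hetasum : ∑ i, F.eta m i = F.alpha0 m := by
    have h1 : ∀ i, F.eta m i = F.n i * (m.pf i).ht / F.trustSum m * F.alpha0 m :=
      fun i => min_eq_left (hmin i)
    rw [Finset.sum_congr rfl fun i _ => h1 i]
    have : ∑ i, F.n i * (m.pf i).ht / F.trustSum m * F.alpha0 m
        = (∑ i, F.n i * (m.pf i).ht) / F.trustSum m * F.alpha0 m := by
      rw [Finset.sum_div, Finset.sum_mul]
    rw [this]
    have : (∑ i, F.n i * (m.pf i).ht) = F.trustSum m := rfl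
    rw [this, div_self (ne_of_gt hT), one_mul]
  -- Step 4: bilateral payments cancel.
  have hswap : ∑ i, ∑ l ∈ (F.C i).erase i, F.price m i l * F.alpha m l
      = ∑ i, ∑ l ∈ (F.C i).erase i, F.price m l i * F.alpha m i := by
    have hE : ∀ i l : Fin N, l ∈ (F.C i).erase i ↔ i ∈ (F.C l).erase l := by
      intro i l
      simp only [Finset.mem_erase]
      constructor
      · rintro ⟨h1, h2⟩; exact ⟨h1.symm, (F.symm_C i l).mpr h2⟩
      · rintro ⟨h1, h2⟩; exact ⟨h1.symm, (F.symm_C i l).mp h2⟩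
    calc ∑ i, ∑ l ∈ (F.C i).erase i, F.price m i l * F.alpha m l
        = ∑ i, ∑ l, if l ∈ (F.C i).erase i then F.price m i l * F.alpha m l else 0 := by
          refine Finset.sum_congr rfl fun i _ => ?_
          rw [Finset.sum_ite_mem, Finset.univ_inter]
      _ = ∑ l, ∑ i, if l ∈ (F.C i).erase i then F.price m i l * F.alpha m l else 0 :=
          Finset.sum_comm
      _ = ∑ l, ∑ i, if i ∈ (F.C l).erase l then F.price m i l * F.alpha m l else 0 := by
          refine Finset.sum_congr rfl fun l _ => Finset.sum_congr rfl fun i _ => ?_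
          rw [if_congr (hE i l) rfl rfl]
      _ = ∑ l, ∑ i ∈ (F.C l).erase l, F.price m i l * F.alpha m l := by
          refine Finset.sum_congr rfl fun l _ => ?_
          rw [Finset.sum_ite_mem, Finset.univ_inter]
      _ = ∑ i, ∑ l ∈ (F.C i).erase i, F.price m l i * F.alpha m i := rfl
  -- Assemble.
  have hsum : ∑ i, F.tax m i = - m.gov.pG * F.alpha0 m := by
    have h1 : ∀ i, F.tax m i = - m.gov.pG * F.eta m i
        - ∑ l ∈ (F.C i).erase i, F.price m l i * F.alpha m i
        + ∑ l ∈ (F.C i).erase i, F.price m i l * F.alpha m l := by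
      intro i
      unfold Framework.tax
      rw [← Finset.sum_mul]
      linarith [hpen i]
    rw [Finset.sum_congr rfl fun i _ => h1 i]
    have expand : ∑ i, (- m.gov.pG * F.eta m i
        - ∑ l ∈ (F.C i).erase i, F.price m l i * F.alpha m i
        + ∑ l ∈ (F.C i).erase i, F.price m i l * F.alpha m l)
      = (∑ i, - m.gov.pG * F.eta m i)
        - (∑ i, ∑ l ∈ (F.C i).erase i, F.price m l i * F.alpha m i)
        + ∑ i, ∑ l ∈ (F.C i).erase i, F.price m i l * F.alpha m l := by
      rw [Finset.sum_add_distrib, Finset.sum_sub_distrib]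
    rw [expand, hswap, ← Finset.mul_sum, hetasum]
    ring
  unfold Framework.tax0
  rw [hsum, hgpG]
  ring

end MisinfoFilter
end

section
/- (Feasibility) Let m* be any generalized Nash equilibrium of the game induced by the misinformation-filtering mechanism, and suppose (n_i·h̃_i* / Σ_{k∈I} n_k·h̃_k*)·α₀(m*) ≤ 1 for every i ∈ I. Then the allocations at m* form a feasible solution of the social welfare problem: 0 ≤ α_i(m*) ≤ 1 for every i ∈ J, α₀(m*) ≤ Σ_{i∈I} n_i·h_i(α_i(m*)), 0 ≤ τ₀(m*) ≤ b₀, and Σ_{i∈J} τ_i(m*) = 0. -/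
open Finset

namespace MisinfoFilter

/-- **Feasibility.** At any GNE `m` at which the minimum in the definition of
`η_i` is not binding, the allocations form a feasible solution of the social welfare
problem: all allocated filters and the allocated lower bound lie in `[0,1]`, the lower
bound is at most the aggregate average trust, the government's investment lies in
`[0, b₀]`, and the taxes sum to zero. -/
theorem feasibility_at_GNE {N : ℕ} (F : Framework N) (hreg : F.Regular)
    (m : Profile N) (hm : F.IsGNE m)
    (hmin : ∀ i, (F.n i * (m.pf i).ht / F.trustSum m) * F.alpha0 m ≤ 1) :
    (∀ i, F.alpha m i ∈ Set.Icc (0:ℝ) 1) ∧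
    F.alpha0 m ∈ Set.Icc (0:ℝ) 1 ∧
    F.alpha0 m ≤ ∑ i, F.n i * F.h i (F.alpha m i) ∧
    0 ≤ F.tax0 m ∧ F.tax0 m ≤ F.b0 ∧
    F.tax0 m + ∑ i, F.tax m i = 0 := by
  obtain ⟨⟨hvalid, hgvalid, hT⟩, hfeas, hα0, hbud, hdevP, hdevG⟩ := hm
  have hπ0 : 0 ≤ F.price0 m := by
    apply div_nonneg (Finset.sum_nonneg fun i _ => (hvalid i).2.2)
    positivity
  -- the government's proposed price equals the allocated price
  have hgov : m.gov.pG = F.price0 m := by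
    have hdev := hdevG ⟨F.price0 m, m.gov.aG⟩ hπ0 hα0 hbud
    simp only [Framework.util0, Framework.tax0, Framework.price0, Framework.alpha0,
      Profile.updGov, sub_self] at hdev
    have h1 : (m.gov.pG - F.price0 m) ^ 2 ≤ 0 := by
      simp only [Framework.price0, Framework.alpha0] at *
      nlinarith [hdev]
    have h2 : (m.gov.pG - F.price0 m) ^ 2 = 0 := le_antisymm h1 (sq_nonneg _)
    have h3 := (pow_eq_zero_iff (two_ne_zero)).mp h2
    linarith [h3]
  -- the penalty terms of each platform vanish at the GNE
  have hP : ∀ i, (∑ l ∈ (F.C i).erase i,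
        (m.pf i).pP l * ((m.pf i).a l - F.aAvgMinus m i l) ^ 2)
      + (m.pf i).pG * ((m.pf i).aG - F.aGAvgMinus m i) ^ 2 = 0 := by
    intro i
    set msg : PlatformMsg N :=
      ⟨(m.pf i).ht, fun _ => 0, 0, (m.pf i).a, (m.pf i).aG⟩ with hmsg
    set m' := m.updPf i msg with hm'
    have hupd : ∀ k, m'.pf k = if k = i then msg else m.pf k := by
      intro k
      simp [hm', Profile.updPf, Function.update_apply]
    have hmsgi : m'.pf i = msg := by rw [hupd]; simp
    have hht : ∀ k, (m'.pf k).ht = (m.pf k).ht := by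
      intro k; rw [hupd]; split_ifs with h
      · subst h; rfl
      · rfl
    have ha : ∀ k, (m'.pf k).a = (m.pf k).a := by
      intro k; rw [hupd]; split_ifs with h
      · subst h; rfl
      · rfl
    have haG : ∀ k, (m'.pf k).aG = (m.pf k).aG := by
      intro k; rw [hupd]; split_ifs with h
      · subst h; rfl
      · rfl
    have hpPne : ∀ k, k ≠ i → (m'.pf k).pP = (m.pf k).pP := by
      intro k hk; rw [hupd, if_neg hk]
    have hgov' : m'.gov = m.gov := rfl
    have hTs : F.trustSum m' = F.trustSum m :=
      Finset.sum_congr rfl fun k _ => by rw [hht k]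
    have hal : F.alpha m' = F.alpha m := by
      funext j
      unfold Framework.alpha
      congr 1
      exact Finset.sum_congr rfl fun k _ => by rw [ha k]
    have hal0 : F.alpha0 m' = F.alpha0 m := by
      unfold Framework.alpha0
      rw [hgov']
      congr 2
      exact Finset.sum_congr rfl fun k _ => by rw [haG k]
    have heta : F.eta m' i = F.eta m i := by
      unfold Framework.eta
      rw [hTs, hal0, hht i]
    have hprice1 : ∀ l ∈ (F.C i).erase i, F.price m' l i = F.price m l i := by
      intro l _
      unfold Framework.price
      congr 1
      refine Finset.sum_congr rfl fun k hk => ?_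
      rw [hpPne k (Finset.ne_of_mem_erase (Finset.mem_of_mem_erase hk))]
    have hprice2 : ∀ l ∈ (F.C i).erase i, F.price m' i l = F.price m i l := by
      intro l _
      unfold Framework.price
      congr 1
      refine Finset.sum_congr rfl fun k hk => ?_
      rw [hpPne k (Finset.ne_of_mem_erase hk)]
    have htax' : F.tax m' i = - m.gov.pG * F.eta m i
        - (∑ l ∈ (F.C i).erase i, F.price m l i) * F.alpha m i
        + ∑ l ∈ (F.C i).erase i, F.price m i l * F.alpha m l := by
      have e1 : (∑ l ∈ (F.C i).erase i, F.price m' l i)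
          = ∑ l ∈ (F.C i).erase i, F.price m l i :=
        Finset.sum_congr rfl hprice1
      have e2 : (∑ l ∈ (F.C i).erase i, F.price m' i l * F.alpha m' l)
          = ∑ l ∈ (F.C i).erase i, F.price m i l * F.alpha m l :=
        Finset.sum_congr rfl fun l hl => by rw [hprice2 l hl, hal]
      have e3 : (∑ l ∈ (F.C i).erase i,
          (m'.pf i).pP l * ((m'.pf i).a l - F.aAvgMinus m' i l) ^ 2) = 0 := by
        refine Finset.sum_eq_zero fun l _ => ?_
        rw [hmsgi]
        simp [hmsg]
      have e4 : (m'.pf i).pG * ((m'.pf i).aG - F.aGAvgMinus m' i) ^ 2 = 0 := by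
        rw [hmsgi]
        simp [hmsg]
      unfold Framework.tax
      rw [hgov', heta, e1, e2, e3, e4, hal]
      ring
    have hdev := hdevP i msg ⟨(hvalid i).1, fun l => le_refl 0, le_refl 0⟩
      (by rw [← hm', hTs]; exact hT)
      (by rw [← hm', hal]; exact (hfeas i).1)
      (by rw [← hm', heta, hal]; exact (hfeas i).2)
    rw [← hm'] at hdev
    unfold Framework.util at hdev
    rw [hal, htax'] at hdev
    unfold Framework.tax at hdev
    have hP1 : 0 ≤ ∑ l ∈ (F.C i).erase i,
        (m.pf i).pP l * ((m.pf i).a l - F.aAvgMinus m i l) ^ 2 :=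
      Finset.sum_nonneg fun l _ => mul_nonneg ((hvalid i).2.1 l) (sq_nonneg _)
    have hP2 : 0 ≤ (m.pf i).pG * ((m.pf i).aG - F.aGAvgMinus m i) ^ 2 :=
      mul_nonneg ((hvalid i).2.2) (sq_nonneg _)
    linarith
  -- the sum of the allocated trust bounds is the allocated lower bound
  have hsum_eta : ∑ i, F.eta m i = F.alpha0 m := by
    have h1 : ∑ i, F.eta m i
        = ∑ i, F.n i * (m.pf i).ht / F.trustSum m * F.alpha0 m :=
      Finset.sum_congr rfl fun i _ => min_eq_left (hmin i)
    rw [h1, ← Finset.sum_mul, ← Finset.sum_div]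
    have : (∑ i, F.n i * (m.pf i).ht) = F.trustSum m := rfl
    rw [this, div_self (ne_of_gt hT), one_mul]
  -- the payment terms cancel in the aggregate
  have hmem : ∀ i l : Fin N, l ∈ (F.C i).erase i ↔ i ∈ (F.C l).erase l := by
    intro i l
    simp only [Finset.mem_erase]
    constructor
    · rintro ⟨h1, h2⟩; exact ⟨h1.symm, (F.symm_C l i).mp h2⟩
    · rintro ⟨h1, h2⟩; exact ⟨h1.symm, (F.symm_C l i).mpr h2⟩
  have hcancel : ∑ i, (∑ l ∈ (F.C i).erase i, F.price m i l * F.alpha m l)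
      = ∑ i, (∑ l ∈ (F.C i).erase i, F.price m l i) * F.alpha m i := by
    have step : ∀ (f : Fin N → Fin N → ℝ),
        ∑ i, ∑ l ∈ (F.C i).erase i, f i l
          = ∑ l, ∑ i ∈ (F.C l).erase l, f i l := by
      intro f
      have e1 : ∀ i : Fin N, ∑ l ∈ (F.C i).erase i, f i l
          = ∑ l, if l ∈ (F.C i).erase i then f i l else 0 := by
        intro i
        rw [Finset.sum_ite_mem, Finset.univ_inter]
      have e2 : ∀ l : Fin N, ∑ i ∈ (F.C l).erase l, f i l
          = ∑ i, if i ∈ (F.C l).erase l then f i l else 0 := by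
        intro l
        rw [Finset.sum_ite_mem, Finset.univ_inter]
      simp_rw [e1, e2]
      rw [Finset.sum_comm]
      refine Finset.sum_congr rfl fun l _ => Finset.sum_congr rfl fun i _ => ?_
      exact if_congr (hmem i l) rfl rfl
    rw [step (fun i l => F.price m i l * F.alpha m l)]
    refine Finset.sum_congr rfl fun l _ => ?_
    rw [Finset.sum_mul]
  -- the sum of the platforms' taxes
  have htax_i : ∀ i, F.tax m i = - m.gov.pG * F.eta m i
      - (∑ l ∈ (F.C i).erase i, F.price m l i) * F.alpha m i
      + ∑ l ∈ (F.C i).erase i, F.price m i l * F.alpha m l := by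
    intro i
    have := hP i
    unfold Framework.tax
    linarith
  have hsumtax : ∑ i, F.tax m i = - m.gov.pG * F.alpha0 m := by
    have h0 : ∑ i, F.tax m i = ∑ i, (- m.gov.pG * F.eta m i
        - (∑ l ∈ (F.C i).erase i, F.price m l i) * F.alpha m i
        + ∑ l ∈ (F.C i).erase i, F.price m i l * F.alpha m l) :=
      Finset.sum_congr rfl fun i _ => htax_i i
    rw [h0, Finset.sum_add_distrib, Finset.sum_sub_distrib, hcancel,
      ← Finset.mul_sum, hsum_eta]
    ring
  have htax0 : F.tax0 m = F.price0 m * F.alpha0 m := by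
    unfold Framework.tax0
    rw [hgov]
    ring
  refine ⟨fun i => (hfeas i).1, hα0, ?_, ?_, ?_, ?_⟩
  · calc F.alpha0 m = ∑ i, F.eta m i := hsum_eta.symm
      _ ≤ ∑ i, F.n i * F.h i (F.alpha m i) :=
        Finset.sum_le_sum fun i _ => (hfeas i).2
  · rw [htax0]; exact mul_nonneg hπ0 hα0.1
  · rw [htax0]; exact hbud
  · rw [htax0, hsumtax, hgov]; ring

end MisinfoFilter
end

section
/- (Strong implementation) Let m* be any generalized Nash equilibrium of the game induced by the misinformation-filtering mechanism such that (n_i·h̃_i* / Σ_{k∈I} n_k·h̃_k*)·α₀(m*) ≤ 1 for every i ∈ I and the government's budget constraint is inactive at m*, i.e., π₀*·α₀(m*) < b₀. Then the allocated profile (α₀(m*), α₁(m*), …, α_N(m*)) is an optimal solution of the social welfare problem, i.e., it maximizes v₀(a₀) + Σ_{i∈I} v_i(a_k : k ∈ C_i) over all a with 0 ≤ a_i ≤ 1 for every i ∈ J and a₀ ≤ Σ_{i∈I} n_i·h_i(a_i). -/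
open Finset

namespace MisinfoFilter


section Aux

variable {N : ℕ}

private lemma cardC_pos (F : Framework N) (i : Fin N) : (0:ℝ) < ((F.C i).card : ℝ) := by
  have h := F.card_C i
  have : (0:ℕ) < (F.C i).card := by omega
  exact_mod_cast this

private lemma n_le_one (F : Framework N) (i : Fin N) : F.n i ≤ 1 := by
  have h := Finset.single_le_sum (f := F.n) (fun k _ => (F.n_pos k).le) (Finset.mem_univ i)
  rw [F.n_sum] at h
  exact h

private lemma Naddone_pos : (0:ℝ) < (N:ℝ) + 1 := by positivity

/-- update-sum helper -/
private lemma sum_update_mem (pf : Fin N → PlatformMsg N) (i : Fin N) (msg : PlatformMsg N)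
    (s : Finset (Fin N)) (hi : i ∈ s) (f : Fin N → PlatformMsg N → ℝ) :
    ∑ k ∈ s, f k (Function.update pf i msg k) = f i msg + ∑ k ∈ s.erase i, f k (pf k) := by
  rw [← Finset.add_sum_erase _ (fun k => f k (Function.update pf i msg k)) hi,
    Function.update_self]
  congr 1
  exact Finset.sum_congr rfl fun k hk => by
    rw [Function.update_of_ne (Finset.ne_of_mem_erase hk)]

private lemma sum_update_not_mem (pf : Fin N → PlatformMsg N) (i : Fin N) (msg : PlatformMsg N)
    (s : Finset (Fin N)) (hi : i ∉ s) (f : Fin N → PlatformMsg N → ℝ) :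
    ∑ k ∈ s, f k (Function.update pf i msg k) = ∑ k ∈ s, f k (pf k) :=
  Finset.sum_congr rfl fun k hk => by
    rw [Function.update_of_ne (by rintro rfl; exact hi hk)]

private lemma price_updPf (F : Framework N) (m : Profile N) (i : Fin N) (msg : PlatformMsg N)
    (payer target : Fin N) (hi : i ∉ ((F.C target).erase target).erase payer) :
    F.price (m.updPf i msg) payer target = F.price m payer target := by
  unfold Framework.price Profile.updPf
  congr 1
  exact sum_update_not_mem m.pf i msg _ hi (fun _ q => q.pP target)

private lemma cancel (F : Framework N) (m : Profile N) (x : Fin N → ℝ) :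
    ∑ i, (∑ l ∈ (F.C i).erase i, F.price m l i) * x i
      = ∑ i, ∑ l ∈ (F.C i).erase i, F.price m i l * x l := by
  have h : ∀ (i l : Fin N), i ∈ (Finset.univ : Finset (Fin N)) ∧ l ∈ (F.C i).erase i
      ↔ i ∈ (F.C l).erase l ∧ l ∈ (Finset.univ : Finset (Fin N)) := by
    intro i l
    simp only [Finset.mem_univ, true_and, and_true, Finset.mem_erase]
    constructor
    · rintro ⟨hne, hmem⟩
      exact ⟨Ne.symm hne, (F.symm_C i l).mpr hmem⟩
    · rintro ⟨hne, hmem⟩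
      exact ⟨Ne.symm hne, (F.symm_C l i).mpr hmem⟩
  calc ∑ i, (∑ l ∈ (F.C i).erase i, F.price m l i) * x i
      = ∑ i, ∑ l ∈ (F.C i).erase i, F.price m l i * x i := by
        simp_rw [Finset.sum_mul]
    _ = ∑ l, ∑ i ∈ (F.C l).erase l, F.price m l i * x i := Finset.sum_comm' h
    _ = ∑ i, ∑ l ∈ (F.C i).erase i, F.price m i l * x l := rfl


private lemma price0_nonneg (F : Framework N) (m : Profile N) (hm : F.IsGNE m) :
    0 ≤ F.price0 m := by
  obtain ⟨⟨hvalP, _, _⟩, _⟩ := hm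
  exact div_nonneg (Finset.sum_nonneg fun k _ => (hvalP k).2.2) (Nat.cast_nonneg N)

private lemma alpha0_updGov (F : Framework N) (m : Profile N) (g : GovMsg) :
    F.alpha0 (m.updGov g) = (g.aG + ∑ k, (m.pf k).aG) / ((N:ℝ) + 1) := rfl

private lemma price0_updGov (F : Framework N) (m : Profile N) (g : GovMsg) :
    F.price0 (m.updGov g) = F.price0 m := rfl

private lemma pG_eq (F : Framework N) (m : Profile N) (hm : F.IsGNE m) :
    m.gov.pG = F.price0 m := by
  have hπ := price0_nonneg F m hm
  obtain ⟨hval, hfeas, hα0, hbud, hdevP, hdevG⟩ := hm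
  set g : GovMsg := ⟨F.price0 m, m.gov.aG⟩ with hg
  have hαg : F.alpha0 (m.updGov g) = F.alpha0 m := rfl
  have ep : F.price0 (m.updGov g) = F.price0 m := rfl
  have egov : (m.updGov g).gov.pG = F.price0 m := rfl
  have hle := hdevG g hπ (by rw [hαg]; exact hα0) (by rw [ep, hαg]; exact hbud)
  have e1 : F.util0 (m.updGov g) = F.v0 (F.alpha0 m) - F.price0 m * F.alpha0 m := by
    simp only [Framework.util0, Framework.tax0, ep, hαg, egov, sub_self]
    norm_num
  have e2 : F.util0 m
      = F.v0 (F.alpha0 m) - (F.price0 m * F.alpha0 m + (m.gov.pG - F.price0 m) ^ 2) := by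
    simp only [Framework.util0, Framework.tax0]
  rw [e1, e2] at hle
  have h2 : (m.gov.pG - F.price0 m) ^ 2 ≤ 0 := by linarith
  have h3 : m.gov.pG - F.price0 m = 0 :=
    pow_eq_zero_iff (n := 2) (by norm_num) |>.mp (le_antisymm h2 (sq_nonneg _))
  linarith

private lemma gov_opt_budget (F : Framework N) (m : Profile N) (hm : F.IsGNE m)
    (a0 : ℝ) (h0 : a0 ∈ Set.Icc (0:ℝ) 1) (hb : F.price0 m * a0 ≤ F.b0) :
    F.v0 a0 - F.price0 m * a0 ≤ F.v0 (F.alpha0 m) - F.price0 m * F.alpha0 m := by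
  have hπ := price0_nonneg F m hm
  have hpg := pG_eq F m hm
  obtain ⟨hval, hfeas, hα0, hbud, hdevP, hdevG⟩ := hm
  set g : GovMsg := ⟨F.price0 m, a0 * ((N:ℝ)+1) - ∑ k, (m.pf k).aG⟩ with hg
  have hαg : F.alpha0 (m.updGov g) = a0 := by
    rw [alpha0_updGov]
    show (a0 * ((N:ℝ)+1) - ∑ k, (m.pf k).aG + ∑ k, (m.pf k).aG) / ((N:ℝ) + 1) = a0
    field_simp
    ring
  have ep : F.price0 (m.updGov g) = F.price0 m := rfl
  have egov : (m.updGov g).gov.pG = F.price0 m := rfl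
  have hle := hdevG g hπ (by rw [hαg]; exact h0) (by rw [ep, hαg]; exact hb)
  have e1 : F.util0 (m.updGov g) = F.v0 a0 - F.price0 m * a0 := by
    simp only [Framework.util0, Framework.tax0, ep, hαg, egov, sub_self]
    norm_num
  have e2 : F.util0 m
      = F.v0 (F.alpha0 m) - (F.price0 m * F.alpha0 m + (m.gov.pG - F.price0 m) ^ 2) := by
    simp only [Framework.util0, Framework.tax0]
  rw [e1, e2, hpg, sub_self] at hle
  simp only [ne_eq, OfNat.ofNat_ne_zero, not_false_eq_true, zero_pow] at hle
  linarith

private lemma gov_opt (F : Framework N) (m : Profile N) (hm : F.IsGNE m)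
    (hreg : F.Regular) (hbudget : F.price0 m * F.alpha0 m < F.b0)
    (a0 : ℝ) (h0 : a0 ∈ Set.Icc (0:ℝ) 1) :
    F.v0 a0 - F.price0 m * a0 ≤ F.v0 (F.alpha0 m) - F.price0 m * F.alpha0 m := by
  by_cases hb : F.price0 m * a0 ≤ F.b0
  · exact gov_opt_budget F m hm a0 h0 hb
  · push_neg at hb
    have hα0 : F.alpha0 m ∈ Set.Icc (0:ℝ) 1 := hm.2.2.1
    have hb0 := F.b0_nonneg
    have hπpos : 0 < F.price0 m := by
      rcases le_or_gt (F.price0 m) 0 with h | h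
      · exfalso
        have : F.price0 m * a0 ≤ 0 := mul_nonpos_of_nonpos_of_nonneg h h0.1
        linarith
      · exact h
    have haα : F.alpha0 m < a0 := by nlinarith
    set lam : ℝ := (F.b0 - F.price0 m * F.alpha0 m) / (F.price0 m * (a0 - F.alpha0 m)) with hlam
    have hden : 0 < F.price0 m * (a0 - F.alpha0 m) := mul_pos hπpos (by linarith)
    have hlam0 : 0 < lam := div_pos (by linarith) hden
    have hlam1 : lam < 1 := (div_lt_one hden).mpr (by nlinarith)
    set z : ℝ := (1 - lam) * F.alpha0 m + lam * a0 with hz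
    have hz01 : z ∈ Set.Icc (0:ℝ) 1 := by
      constructor
      · have := hα0.1; have := h0.1; nlinarith
      · have := hα0.2; have := h0.2; nlinarith
    have hzb : F.price0 m * z ≤ F.b0 := by
      have : lam * (F.price0 m * (a0 - F.alpha0 m)) = F.b0 - F.price0 m * F.alpha0 m := by
        rw [hlam]; field_simp
        exact mul_div_cancel_right₀ _ (sub_ne_zero.mpr haα.ne')
      nlinarith [this]
    have hconc := hreg.v0_concave.2 hα0 h0 (by linarith : (0:ℝ) ≤ 1 - lam) hlam0.le
      (by ring : (1 - lam) + lam = 1)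
    simp only [smul_eq_mul] at hconc
    have hzle := gov_opt_budget F m hm z hz01 hzb
    rw [hz] at hzle
    have key : lam * (F.v0 a0 - F.price0 m * a0) ≤ lam * (F.v0 (F.alpha0 m) - F.price0 m * F.alpha0 m) := by
      nlinarith [hconc, hzle]
    exact le_of_mul_le_mul_left key hlam0


private lemma sum_eta (F : Framework N) (m : Profile N) (hm : F.IsGNE m)
    (hmin : ∀ i, (F.n i * (m.pf i).ht / F.trustSum m) * F.alpha0 m ≤ 1) :
    ∑ i, F.eta m i = F.alpha0 m := by
  have hT : 0 < F.trustSum m := hm.1.2.2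
  have he : ∀ i, F.eta m i = (F.n i * (m.pf i).ht) * (F.alpha0 m / F.trustSum m) := by
    intro i
    rw [Framework.eta, min_eq_left (hmin i)]
    ring
  calc ∑ i, F.eta m i = ∑ i, (F.n i * (m.pf i).ht) * (F.alpha0 m / F.trustSum m) :=
        Finset.sum_congr rfl fun i _ => he i
    _ = F.trustSum m * (F.alpha0 m / F.trustSum m) := by
        rw [← Finset.sum_mul]; rfl
    _ = F.alpha0 m := by
        field_simp

private lemma platform_ineq (F : Framework N) (m : Profile N) (hreg : F.Regular)
    (hm : F.IsGNE m) (i : Fin N) (a : Fin N → ℝ) (ha : ∀ k, a k ∈ Set.Icc (0:ℝ) 1) :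
    F.v i a + m.gov.pG * (F.n i * F.h i (a i))
      + (∑ l ∈ (F.C i).erase i, F.price m l i) * a i
      - ∑ l ∈ (F.C i).erase i, F.price m i l * a l
    ≤ F.v i (F.alpha m) + m.gov.pG * F.eta m i
      + (∑ l ∈ (F.C i).erase i, F.price m l i) * F.alpha m i
      - ∑ l ∈ (F.C i).erase i, F.price m i l * F.alpha m l := by
  obtain ⟨⟨hvalP, hvalG, hT⟩, hfeas, hα0, hbud, hdevP, hdevG⟩ := hm
  have hh01 : F.h i (a i) ∈ Set.Icc (0:ℝ) 1 := hreg.h_maps i (ha i)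
  have hni : 0 < F.n i := F.n_pos i
  have hni1 : F.n i ≤ 1 := n_le_one F i
  -- the part of the trust sum not owned by i
  set S : ℝ := ∑ k ∈ Finset.univ.erase i, F.n k * (m.pf k).ht with hSdef
  have hSnn : 0 ≤ S := Finset.sum_nonneg fun k _ => mul_nonneg (F.n_pos k).le (hvalP k).1
  set T' : ℝ := F.n i + S with hT'def
  have hT'pos : 0 < T' := by positivity
  set SG : ℝ := ∑ k ∈ Finset.univ.erase i, (m.pf k).aG with hSGdef
  set msg : PlatformMsg N := {
    ht := 1
    pP := fun _ => 0
    pG := 0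
    a := fun l => ((F.C l).card : ℝ) * a l - ∑ k ∈ (F.C l).erase i, (m.pf k).a l
    aG := F.h i (a i) * T' * ((N:ℝ)+1) - m.gov.aG - SG } with hmsg
  have hmv : msg.Valid := ⟨by norm_num [hmsg], fun l => by norm_num [hmsg], by norm_num [hmsg]⟩
  have hpf : (m.updPf i msg).pf = Function.update m.pf i msg := rfl
  have hgov : (m.updPf i msg).gov = m.gov := rfl
  -- trust sum of the deviation
  have hts : F.trustSum (m.updPf i msg) = T' := by
    rw [Framework.trustSum, hpf,
      sum_update_mem m.pf i msg _ (Finset.mem_univ i) (fun k q => F.n k * q.ht)]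
    simp [hmsg, hT'def, hSdef]
  -- allocated lower bound of the deviation
  have hα0dev : F.alpha0 (m.updPf i msg) = F.h i (a i) * T' := by
    rw [Framework.alpha0, hpf, hgov,
      sum_update_mem m.pf i msg _ (Finset.mem_univ i) (fun _ q => q.aG)]
    rw [show msg.aG = F.h i (a i) * T' * ((N:ℝ)+1) - m.gov.aG - SG from rfl, ← hSGdef]
    field_simp
    ring
  -- allocated trust of the deviation
  have hetadev : F.eta (m.updPf i msg) i = F.n i * F.h i (a i) := by
    rw [Framework.eta, hts, hα0dev, hpf, Function.update_self,
      show msg.ht = 1 from rfl]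
    have : F.n i * 1 / T' * (F.h i (a i) * T') = F.n i * F.h i (a i) := by
      field_simp
    rw [this]
    exact min_eq_left (by nlinarith [hh01.1, hh01.2])
  -- allocated filters of the deviation
  have halphadev : ∀ l, i ∈ F.C l → F.alpha (m.updPf i msg) l = a l := by
    intro l hil
    rw [Framework.alpha, hpf, sum_update_mem m.pf i msg _ hil (fun _ q => q.a l),
      show msg.a l = ((F.C l).card : ℝ) * a l - ∑ k ∈ (F.C l).erase i, (m.pf k).a l from rfl]
    have hc := cardC_pos F l
    field_simp
    ring
  have hαi : F.alpha (m.updPf i msg) i = a i := halphadev i (F.mem_C i)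
  -- feasibility of the deviation
  have hle := hdevP i msg hmv (by rw [hts]; exact hT'pos)
    (by rw [hαi]; exact ha i)
    (by rw [hetadev, hαi])
  -- prices unchanged
  have hpr1 : ∀ l ∈ (F.C i).erase i, F.price (m.updPf i msg) l i = F.price m l i := by
    intro l hl
    exact price_updPf F m i msg l i
      (fun h => Finset.notMem_erase i _ (Finset.mem_of_mem_erase h))
  have hpr2 : ∀ l ∈ (F.C i).erase i, F.price (m.updPf i msg) i l = F.price m i l := by
    intro l hl
    exact price_updPf F m i msg i l (Finset.notMem_erase i _)
  -- value of the deviation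
  have hvdev : F.v i (F.alpha (m.updPf i msg)) = F.v i a :=
    F.v_localized i _ a fun k hk => halphadev k ((F.symm_C i k).mpr hk)
  -- compute the utility of the deviation
  have hudev : F.util (m.updPf i msg) i
      = F.v i a + m.gov.pG * (F.n i * F.h i (a i))
        + (∑ l ∈ (F.C i).erase i, F.price m l i) * a i
        - ∑ l ∈ (F.C i).erase i, F.price m i l * a l := by
    rw [Framework.util, Framework.tax, hvdev, hetadev, hαi, hgov]
    rw [hpf, Function.update_self]
    have e1 : ∑ l ∈ (F.C i).erase i, F.price (m.updPf i msg) l i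
        = ∑ l ∈ (F.C i).erase i, F.price m l i := Finset.sum_congr rfl hpr1
    have e2 : ∑ l ∈ (F.C i).erase i, F.price (m.updPf i msg) i l * F.alpha (m.updPf i msg) l
        = ∑ l ∈ (F.C i).erase i, F.price m i l * a l := by
      refine Finset.sum_congr rfl fun l hl => ?_
      rw [hpr2 l hl, halphadev l ((F.symm_C i l).mpr (Finset.mem_of_mem_erase hl))]
    rw [e1, e2]
    have e3 : ∑ l ∈ (F.C i).erase i, msg.pP l *
        ((msg.a l - F.aAvgMinus (m.updPf i msg) i l) ^ 2) = 0 := by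
      refine Finset.sum_eq_zero fun l _ => ?_
      rw [show msg.pP l = 0 from rfl, zero_mul]
    rw [e3, show msg.pG = 0 from rfl, zero_mul]
    ring
  -- bound the utility at equilibrium
  have hum : F.util m i ≤ F.v i (F.alpha m) + m.gov.pG * F.eta m i
      + (∑ l ∈ (F.C i).erase i, F.price m l i) * F.alpha m i
      - ∑ l ∈ (F.C i).erase i, F.price m i l * F.alpha m l := by
    rw [Framework.util, Framework.tax]
    have h1 : 0 ≤ ∑ l ∈ (F.C i).erase i, (m.pf i).pP l * ((m.pf i).a l - F.aAvgMinus m i l) ^ 2 :=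
      Finset.sum_nonneg fun l _ => mul_nonneg ((hvalP i).2.1 l) (sq_nonneg _)
    have h2 : 0 ≤ (m.pf i).pG * ((m.pf i).aG - F.aGAvgMinus m i) ^ 2 :=
      mul_nonneg (hvalP i).2.2 (sq_nonneg _)
    simp only [neg_mul]
    linarith [h1, h2]
  rw [hudev] at hle
  linarith

end Aux


/-- **Strong implementation.** Let `m` be any GNE at which the minimum in the
definition of `η_i` is not binding and the government's budget constraint is inactive.
Then the allocated profile `(α₀(m), α₁(m), …, α_N(m))` is an optimal solution of the social
welfare problem. -/
theorem strong_implementation {N : ℕ} (F : Framework N) (hreg : F.Regular)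
    (m : Profile N) (hm : F.IsGNE m)
    (hmin : ∀ i, (F.n i * (m.pf i).ht / F.trustSum m) * F.alpha0 m ≤ 1)
    (hbudget : F.price0 m * F.alpha0 m < F.b0) :
    F.alpha0 m ∈ Set.Icc (0:ℝ) 1 ∧
    (∀ i, F.alpha m i ∈ Set.Icc (0:ℝ) 1) ∧
    F.alpha0 m ≤ ∑ i, F.n i * F.h i (F.alpha m i) ∧
    (∀ (a0 : ℝ) (a : Fin N → ℝ), a0 ∈ Set.Icc (0:ℝ) 1 →
      (∀ i, a i ∈ Set.Icc (0:ℝ) 1) → a0 ≤ ∑ i, F.n i * F.h i (a i) →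
      F.v0 a0 + ∑ i, F.v i a ≤ F.v0 (F.alpha0 m) + ∑ i, F.v i (F.alpha m)) := by
  have hπ := price0_nonneg F m hm
  have hpg := pG_eq F m hm
  have hseta := sum_eta F m hm hmin
  have hfeas := hm.2.1
  have hα0 := hm.2.2.1
  refine ⟨hα0, fun i => (hfeas i).1, ?_, ?_⟩
  · rw [← hseta]
    exact Finset.sum_le_sum fun i _ => (hfeas i).2
  · intro a0 a h0 ha hcon
    have hplat := fun i => platform_ineq F m hreg hm i a ha
    have hsum := Finset.sum_le_sum (fun i (_ : i ∈ Finset.univ) => hplat i)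
    simp only [Finset.sum_sub_distrib, Finset.sum_add_distrib, ← Finset.mul_sum] at hsum
    rw [hseta, hpg] at hsum
    have hcancel_a := cancel F m a
    have hcancel_α := cancel F m (F.alpha m)
    have hgov := gov_opt F m hm hreg hbudget a0 h0
    have hmul : F.price0 m * a0 ≤ F.price0 m * ∑ i, F.n i * F.h i (a i) :=
      mul_le_mul_of_nonneg_left hcon hπ
    linarith [hsum, hgov, hmul, hcancel_a, hcancel_α]

end MisinfoFilter
end

section
/- (Individual rationality) Let m* be any generalized Nash equilibrium of the game induced by the misinformation-filtering mechanism. Then for every platform i ∈ I, the equilibrium utility is at least the utility of not participating: u_i(m*) ≥ v_i(a_k = 0 : k ∈ C_i), i.e., the GNE utility of platform i is at least its valuation when all competing filters (including its own) are zero. -/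
open Finset

namespace MisinfoFilter

/-- **Individual rationality.** At any GNE `m` of the induced game, the
equilibrium utility of every platform `i` is at least its valuation when all the filters
of the competing platforms (including its own) are zero. -/
theorem individual_rationality {N : ℕ} (F : Framework N) (hreg : F.Regular)
    (m : Profile N) (hm : F.IsGNE m) :
    ∀ i, F.v i (fun _ => 0) ≤ F.util m i := by
  obtain ⟨⟨hvalid, hgov, htrust⟩, hfeas, hα0, hb, hdev, hgdev⟩ := hm
  intro i
  set msg : PlatformMsg N :=
    { ht := (m.pf i).ht
      pP := fun _ => 0
      pG := 0
      a := fun l => -∑ k ∈ (F.C l).erase i, (m.pf k).a l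
      aG := (m.pf i).aG - (m.gov.aG + ∑ k, (m.pf k).aG) } with hmsg
  set m' := m.updPf i msg with hm'def
  have hpfi : m'.pf i = msg := by
    simp [hm'def, Profile.updPf]
  have hpfne : ∀ k, k ≠ i → m'.pf k = m.pf k := by
    intro k hk
    simp [hm'def, Profile.updPf, Function.update_of_ne hk]
  have hgov' : m'.gov = m.gov := rfl
  -- trust sum unchanged
  have htrust' : F.trustSum m' = F.trustSum m := by
    unfold Framework.trustSum
    refine Finset.sum_congr rfl fun k _ => ?_
    by_cases hk : k = i
    · subst hk; rw [hpfi]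
    · rw [hpfne k hk]
  -- alpha0 of the deviation is zero
  have hsumaG : ∑ k, (m'.pf k).aG = -m.gov.aG := by
    rw [← Finset.add_sum_erase _ _ (Finset.mem_univ i), hpfi]
    have : ∑ k ∈ Finset.univ.erase i, (m'.pf k).aG
        = ∑ k ∈ Finset.univ.erase i, (m.pf k).aG := by
      refine Finset.sum_congr rfl fun k hk => ?_
      rw [hpfne k (Finset.mem_erase.mp hk).1]
    rw [this, Finset.sum_erase_eq_sub (Finset.mem_univ i)]
    simp [hmsg]
  have halpha0 : F.alpha0 m' = 0 := by
    unfold Framework.alpha0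
    rw [hgov', hsumaG]
    simp
  -- alpha of the deviation is zero on C i
  have halpha : ∀ l ∈ F.C i, F.alpha m' l = 0 := by
    intro l hl
    have hil : i ∈ F.C l := (F.symm_C i l).mpr hl
    unfold Framework.alpha
    have hsum : ∑ k ∈ F.C l, (m'.pf k).a l = 0 := by
      rw [← Finset.add_sum_erase _ _ hil, hpfi]
      have : ∑ k ∈ (F.C l).erase i, (m'.pf k).a l
          = ∑ k ∈ (F.C l).erase i, (m.pf k).a l := by
        refine Finset.sum_congr rfl fun k hk => ?_
        rw [hpfne k (Finset.mem_erase.mp hk).1]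
      rw [this]
      simp [hmsg]
    rw [hsum, zero_div]
  -- eta of the deviation is zero
  have heta' : F.eta m' i = 0 := by
    unfold Framework.eta
    rw [halpha0, mul_zero]
    exact min_eq_left zero_le_one
  -- the deviation is valid
  have hmsgval : msg.Valid := by
    refine ⟨(hvalid i).1, fun l => le_refl 0, le_refl 0⟩
  have htrustpos' : 0 < F.trustSum m' := by rw [htrust']; exact htrust
  have halphai : F.alpha m' i = 0 := halpha i (F.mem_C i)
  have halphai' : F.alpha m' i ∈ Set.Icc (0:ℝ) 1 := by
    rw [halphai]; exact ⟨le_refl 0, zero_le_one⟩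
  have hfeas' : F.eta m' i ≤ F.n i * F.h i (F.alpha m' i) := by
    rw [heta', halphai]
    have h0 : F.h i 0 ∈ Set.Icc (0:ℝ) 1 :=
      hreg.h_maps i ⟨le_refl 0, zero_le_one⟩
    exact mul_nonneg (F.n_pos i).le h0.1
  -- tax of the deviation is zero
  have htax' : F.tax m' i = 0 := by
    unfold Framework.tax
    rw [heta', halphai, hgov']
    have hmid : ∑ l ∈ (F.C i).erase i, F.price m' i l * F.alpha m' l = 0 := by
      refine Finset.sum_eq_zero fun l hl => ?_
      rw [halpha l (Finset.mem_erase.mp hl).2, mul_zero]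
    have hpen : ∑ l ∈ (F.C i).erase i,
        (m'.pf i).pP l * ((m'.pf i).a l - F.aAvgMinus m' i l) ^ 2 = 0 := by
      refine Finset.sum_eq_zero fun l hl => ?_
      rw [hpfi]
      simp [hmsg]
    rw [hmid, hpen, hpfi]
    simp [hmsg]
  -- utility of the deviation
  have hutil' : F.util m' i = F.v i (fun _ => 0) := by
    unfold Framework.util
    rw [htax', sub_zero]
    exact F.v_localized i (F.alpha m') (fun _ => 0) halpha
  have := hdev i msg hmsgval htrustpos' halphai' hfeas'
  rw [← hm'def] at this
  rw [hutil'] at this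
  exact this

end MisinfoFilter
end

section
/- (Zero-tax opt-out deviation) Fix a platform i ∈ I and any messages m_{-i} of all other players. Then there exists a message m_i for platform i, with all its proposed prices equal to zero (p̃_l^i = 0 for every l ∈ D_{-i}), such that under m = (m_i, m_{-i}): α_k(m) = 0 for every k ∈ C_i, α₀(m) = 0, η_i(m) = 0, τ_i(m) = 0, and consequently u_i(m) = v_i(a_k = 0 : k ∈ C_i). -/
open Finset

namespace MisinfoFilter

/-- **Zero-tax opt-out deviation.** Fix a platform `i` and the messages of
all other players (encoded in the profile `m`). Then platform `i` has a valid message with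
all proposed prices equal to zero such that, under the deviated profile, all filters
allocated to the platforms in `C i` are zero, the allocated lower bound is zero,
`η_i` vanishes, `i`'s tax is zero, and `i`'s utility equals its valuation at the all-zero
filter profile. -/
theorem zero_tax_opt_out {N : ℕ} (F : Framework N) (i : Fin N) (m : Profile N) :
    ∃ msg : PlatformMsg N, msg.Valid ∧ (∀ l, msg.pP l = 0) ∧ msg.pG = 0 ∧
      (∀ k ∈ F.C i, F.alpha (m.updPf i msg) k = 0) ∧
      F.alpha0 (m.updPf i msg) = 0 ∧
      F.eta (m.updPf i msg) i = 0 ∧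
      F.tax (m.updPf i msg) i = 0 ∧
      F.util (m.updPf i msg) i = F.v i (fun _ => 0) := by
  classical
  set msg : PlatformMsg N :=
    { ht := 1
      pP := fun _ => 0
      pG := 0
      a := fun k => -(∑ l ∈ (F.C k).erase i, (m.pf l).a k)
      aG := -(m.gov.aG + ∑ l ∈ Finset.univ.erase i, (m.pf l).aG) } with hmsg
  set m' : Profile N := m.updPf i msg with hm'
  have hpf : ∀ k, k ≠ i → m'.pf k = m.pf k := by
    intro k hk
    simp [hm', Profile.updPf, Function.update_of_ne hk]
  have hpfi : m'.pf i = msg := by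
    simp [hm', Profile.updPf]
  have hgov : m'.gov = m.gov := rfl
  -- alpha is zero on C i
  have halpha : ∀ k ∈ F.C i, F.alpha m' k = 0 := by
    intro k hk
    have hik : i ∈ F.C k := (F.symm_C i k).mpr hk
    have hsum : ∑ l ∈ F.C k, (m'.pf l).a k = 0 := by
      rw [← Finset.add_sum_erase _ _ hik, hpfi]
      have : ∑ l ∈ (F.C k).erase i, (m'.pf l).a k
          = ∑ l ∈ (F.C k).erase i, (m.pf l).a k := by
        refine Finset.sum_congr rfl fun l hl => ?_
        rw [hpf l (Finset.ne_of_mem_erase hl)]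
      rw [this]
      simp [hmsg]
    simp [Framework.alpha, hsum]
  -- alpha0 is zero
  have halpha0 : F.alpha0 m' = 0 := by
    have hsum : m'.gov.aG + ∑ k, (m'.pf k).aG = 0 := by
      have hiu : i ∈ (Finset.univ : Finset (Fin N)) := Finset.mem_univ i
      rw [← Finset.add_sum_erase _ _ hiu, hpfi]
      have : ∑ l ∈ Finset.univ.erase i, (m'.pf l).aG
          = ∑ l ∈ Finset.univ.erase i, (m.pf l).aG := by
        refine Finset.sum_congr rfl fun l hl => ?_
        rw [hpf l (Finset.ne_of_mem_erase hl)]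
      rw [this, hgov]
      simp [hmsg]
      ring
    simp [Framework.alpha0, hsum]
  -- eta is zero
  have heta : F.eta m' i = 0 := by
    simp [Framework.eta, halpha0]
  -- tax is zero
  have htax : F.tax m' i = 0 := by
    have hi : i ∈ F.C i := F.mem_C i
    have h1 : F.alpha m' i = 0 := halpha i hi
    have h2 : ∀ l ∈ (F.C i).erase i, F.alpha m' l = 0 := fun l hl =>
      halpha l (Finset.mem_of_mem_erase hl)
    have h3 : ∀ l, (m'.pf i).pP l = 0 := by simp [hpfi, hmsg]
    have h4 : (m'.pf i).pG = 0 := by simp [hpfi, hmsg]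
    unfold Framework.tax
    rw [heta, h1, h4, hgov]
    have hs1 : ∑ l ∈ (F.C i).erase i, F.price m' i l * F.alpha m' l = 0 :=
      Finset.sum_eq_zero fun l hl => by rw [h2 l hl, mul_zero]
    have hs2 : ∑ l ∈ (F.C i).erase i,
        (m'.pf i).pP l * ((m'.pf i).a l - F.aAvgMinus m' i l) ^ 2 = 0 :=
      Finset.sum_eq_zero fun l _ => by rw [h3 l, zero_mul]
    rw [hs1, hs2]
    ring
  -- conclusion
  refine ⟨msg, ⟨by norm_num [hmsg], fun l => by simp [hmsg], by simp [hmsg]⟩,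
    fun l => by simp [hmsg], by simp [hmsg], halpha, halpha0, heta, htax, ?_⟩
  unfold Framework.util
  rw [htax, sub_zero]
  exact F.v_localized i _ _ halpha

end MisinfoFilter
end

section
/- (Pareto efficiency under quasi-concavity) Suppose each platform i ∈ I has a quasi-concave, differentiable valuation v_i : [0,1]^{C_i} → [0,∞) that is decreasing in its own coordinate and strictly increasing in the coordinates of l ∈ C_{-i}; the government's valuation v₀ : [0,1] → [0,∞) is quasi-concave, differentiable and increasing; and each average trust function h_i : [0,1] → [0,1] is differentiable, increasing and concave. Then every generalized Nash equilibrium m* of the game induced by the misinformation-filtering mechanism is Pareto efficient: there do not exist filters a ∈ [0,1]^{I}, a lower bound a₀ ∈ [0,1] with a₀ ≤ Σ_{i∈I} n_i·h_i(a_i), and transfers (t_j)_{j∈J} ∈ ℝ^{J} with Σ_{j∈J} t_j = 0 and 0 ≤ t₀ ≤ b₀, such that v_i(a_k : k ∈ C_i) − t_i ≥ u_i(m*) for every i ∈ I and v₀(a₀) − t₀ ≥ u₀(m*), with at least one of these inequalities strict. -/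
open Finset

namespace MisinfoFilter

/-- The relaxed regularity assumptions: valuations are quasi-concave and differentiable
(platforms' decreasing in the own coordinate and strictly increasing in the others',
the government's increasing), and each average trust function maps `[0,1]` into `[0,1]`
and is differentiable, increasing and concave. -/
structure Framework.QuasiRegular {N : ℕ} (F : Framework N) : Prop where
  h_maps : ∀ i, Set.MapsTo (F.h i) (Set.Icc 0 1) (Set.Icc 0 1)
  h_mono : ∀ i, MonotoneOn (F.h i) (Set.Icc 0 1)
  h_concave : ∀ i, ConcaveOn ℝ (Set.Icc 0 1) (F.h i)
  h_diff : ∀ i, DifferentiableOn ℝ (F.h i) (Set.Icc 0 1)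
  v_nonneg : ∀ i p, (∀ k, p k ∈ Set.Icc (0:ℝ) 1) → 0 ≤ F.v i p
  v_quasiconcave : ∀ i,
    QuasiconcaveOn ℝ {p : Fin N → ℝ | ∀ k, p k ∈ Set.Icc (0:ℝ) 1} (F.v i)
  v_diff : ∀ i, DifferentiableOn ℝ (F.v i) {p : Fin N → ℝ | ∀ k, p k ∈ Set.Icc (0:ℝ) 1}
  v_own_anti : ∀ i p, (∀ k, p k ∈ Set.Icc (0:ℝ) 1) →
    ∀ x y : ℝ, x ∈ Set.Icc (0:ℝ) 1 → y ∈ Set.Icc (0:ℝ) 1 → x ≤ y →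
      F.v i (Function.update p i y) ≤ F.v i (Function.update p i x)
  v_other_strictMono : ∀ i l, l ∈ F.C i → l ≠ i →
    ∀ p, (∀ k, p k ∈ Set.Icc (0:ℝ) 1) →
    ∀ x y : ℝ, x ∈ Set.Icc (0:ℝ) 1 → y ∈ Set.Icc (0:ℝ) 1 → x < y →
      F.v i (Function.update p l x) < F.v i (Function.update p l y)
  v0_nonneg : ∀ x ∈ Set.Icc (0:ℝ) 1, 0 ≤ F.v0 x
  v0_mono : MonotoneOn F.v0 (Set.Icc 0 1)
  v0_quasiconcave : QuasiconcaveOn ℝ (Set.Icc 0 1) F.v0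
  v0_diff : DifferentiableOn ℝ F.v0 (Set.Icc 0 1)


private lemma sum_update_split {N : ℕ} {M : Type*} [AddCommMonoid M] (pf : Fin N → PlatformMsg N)
    (i : Fin N) (msg : PlatformMsg N) (s : Finset (Fin N)) (hi : i ∈ s)
    (g : Fin N → PlatformMsg N → M) :
    ∑ k ∈ s, g k (Function.update pf i msg k)
      = g i msg + ∑ k ∈ s.erase i, g k (pf k) := by
  rw [← Finset.add_sum_erase s _ hi, Function.update_self]
  congr 1
  refine Finset.sum_congr rfl fun k hk => ?_
  rw [Function.update_of_ne (Finset.ne_of_mem_erase hk)]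

/-- **Pareto efficiency under quasi-concavity.** Under the relaxed
(quasi-concave) regularity assumptions, every GNE `m` of the induced game is Pareto
efficient: there is no feasible choice of filters `a ∈ [0,1]^I`, lower bound
`a₀ ∈ [0,1]` with `a₀ ≤ Σ_i n_i·h_i(a_i)`, and budget-balanced transfers `(t₀, t)`
with `0 ≤ t₀ ≤ b₀` that makes every player weakly better off and some player strictly
better off than at the equilibrium. -/
theorem GNE_pareto_efficient_of_quasiconcave {N : ℕ} (F : Framework N)
    (hq : F.QuasiRegular) (m : Profile N) (hm : F.IsGNE m) :
    ¬ ∃ (a0 : ℝ) (a : Fin N → ℝ) (t0 : ℝ) (t : Fin N → ℝ),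
      a0 ∈ Set.Icc (0:ℝ) 1 ∧ (∀ i, a i ∈ Set.Icc (0:ℝ) 1) ∧
      a0 ≤ ∑ i, F.n i * F.h i (a i) ∧
      t0 + ∑ i, t i = 0 ∧ 0 ≤ t0 ∧ t0 ≤ F.b0 ∧
      (∀ i, F.util m i ≤ F.v i a - t i) ∧
      F.util0 m ≤ F.v0 a0 - t0 ∧
      ((∃ i, F.util m i < F.v i a - t i) ∨ F.util0 m < F.v0 a0 - t0) := by
  rintro ⟨a0, a, t0, t, ha0, ha, ha0H, hbal, ht00, ht0b, hdomP, hdomG, hstrict⟩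
  obtain ⟨⟨hval, hgval, hts⟩, hfeas, halpha0, hbudget, hdevP, hdevG⟩ := hm
  set π := F.price0 m with hπdef
  have hN0 : (0:ℝ) < (N:ℝ) := by
    have := F.hN; exact_mod_cast Nat.lt_of_lt_of_le Nat.zero_lt_one this
  have hN1' : ((N:ℝ) + 1) ≠ 0 := by positivity
  have hπ0 : 0 ≤ π := by
    refine div_nonneg (Finset.sum_nonneg fun k _ => (hval k).2.2) hN0.le
  -- KEY0 : the government's price proposal equals the allocated price
  have hKEY0 : m.gov.pG = π := by
    have h1 : F.util0 (m.updGov ⟨π, m.gov.aG⟩) ≤ F.util0 m := by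
      refine hdevG ⟨π, m.gov.aG⟩ hπ0 ?_ ?_
      · exact halpha0
      · exact hbudget
    have h2 : F.util0 (m.updGov ⟨π, m.gov.aG⟩)
        = F.v0 (F.alpha0 m) - π * F.alpha0 m := by
      have hp : F.price0 (m.updGov ⟨π, m.gov.aG⟩) = π := rfl
      have hα : F.alpha0 (m.updGov ⟨π, m.gov.aG⟩) = F.alpha0 m := rfl
      have hgp : (m.updGov (⟨π, m.gov.aG⟩ : GovMsg)).gov.pG = π := rfl
      simp only [Framework.util0, Framework.tax0, hp, hα, hgp]
      ring
    have h3 : F.util0 m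
        = F.v0 (F.alpha0 m) - (π * F.alpha0 m + (m.gov.pG - π) ^ 2) := rfl
    have h4 : (m.gov.pG - π) ^ 2 ≤ 0 := by rw [h2, h3] at h1; linarith
    have h5 : m.gov.pG - π = 0 := by nlinarith [sq_nonneg (m.gov.pG - π)]
    linarith
  -- KEY1 : platform deviation inequality
  have hKEY1 : ∀ i : Fin N,
      F.v i a + π * (F.n i * F.h i (a i))
        + ((∑ l ∈ (F.C i).erase i, F.price m l i) * a i
          - ∑ l ∈ (F.C i).erase i, F.price m i l * a l) ≤ F.util m i := by
    intro i
    set T' : ℝ := F.n i + ∑ k ∈ Finset.univ.erase i, F.n k * (m.pf k).ht with hT'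
    have hT'pos : 0 < T' := by
      have h1 : 0 ≤ ∑ k ∈ Finset.univ.erase i, F.n k * (m.pf k).ht :=
        Finset.sum_nonneg fun k _ => mul_nonneg (F.n_pos k).le (hval k).1
      have := F.n_pos i; rw [hT']; linarith
    set msg : PlatformMsg N :=
      { ht := 1, pP := fun _ => 0, pG := 0,
        a := fun l => ((F.C l).card : ℝ) * a l - ∑ k ∈ (F.C l).erase i, (m.pf k).a l,
        aG := ((N:ℝ)+1) * (F.h i (a i) * T') - m.gov.aG
          - ∑ k ∈ Finset.univ.erase i, (m.pf k).aG } with hmsg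
    set m' := m.updPf i msg with hm'
    have hgov' : m'.gov = m.gov := rfl
    have hts' : F.trustSum m' = T' := by
      simp only [Framework.trustSum, hm', Profile.updPf]
      rw [sum_update_split m.pf i msg Finset.univ (Finset.mem_univ i)
        (fun k p => F.n k * p.ht)]
      simp only [hmsg, hT']
      ring
    have halphal : ∀ l ∈ F.C i, F.alpha m' l = a l := by
      intro l hl
      have hil : i ∈ F.C l := (F.symm_C i l).mpr hl
      have hcard : ((F.C l).card : ℝ) ≠ 0 := by
        have h3 := F.card_C l
        have : (0:ℝ) < ((F.C l).card : ℝ) := by exact_mod_cast (by omega : 0 < (F.C l).card)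
        exact this.ne'
      simp only [Framework.alpha, hm', Profile.updPf]
      rw [sum_update_split m.pf i msg (F.C l) hil (fun k p => p.a l)]
      simp only [hmsg]
      field_simp
      ring
    have halpha0' : F.alpha0 m' = F.h i (a i) * T' := by
      simp only [Framework.alpha0, hm', Profile.updPf]
      rw [sum_update_split m.pf i msg Finset.univ (Finset.mem_univ i)
        (fun k p => p.aG)]
      simp only [hmsg]
      field_simp
      ring
    have hh01 : F.h i (a i) ∈ Set.Icc (0:ℝ) 1 := hq.h_maps i (ha i)
    have hni1 : F.n i ≤ 1 := by
      have h1 : F.n i ≤ ∑ k, F.n k :=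
        Finset.single_le_sum (fun k _ => (F.n_pos k).le) (Finset.mem_univ i)
      rw [F.n_sum] at h1; exact h1
    have hnh1 : F.n i * F.h i (a i) ≤ 1 := by
      calc F.n i * F.h i (a i) ≤ 1 * 1 :=
            mul_le_mul hni1 hh01.2 hh01.1 zero_le_one
        _ = 1 := one_mul 1
    have hpfi : m'.pf i = msg := by
      simp [hm', Profile.updPf]
    have heta' : F.eta m' i = F.n i * F.h i (a i) := by
      simp only [Framework.eta, hts', halpha0', hpfi, hmsg]
      have h1 : F.n i * (1:ℝ) / T' * (F.h i (a i) * T') = F.n i * F.h i (a i) := by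
        field_simp
      rw [h1, min_eq_left hnh1]
    have hpr1 : ∀ l, F.price m' l i = F.price m l i := by
      intro l
      simp only [Framework.price, hm', Profile.updPf]
      congr 1
      refine Finset.sum_congr rfl fun k hk => ?_
      have hk' : k ≠ i := (Finset.mem_erase.mp (Finset.mem_of_mem_erase hk)).1
      rw [Function.update_of_ne hk']
    have hpr2 : ∀ l, F.price m' i l = F.price m i l := by
      intro l
      simp only [Framework.price, hm', Profile.updPf]
      congr 1
      refine Finset.sum_congr rfl fun k hk => ?_
      have hk' : k ≠ i := (Finset.mem_erase.mp hk).1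
      rw [Function.update_of_ne hk']
    have htax : F.tax m' i = - m.gov.pG * (F.n i * F.h i (a i))
        - (∑ l ∈ (F.C i).erase i, F.price m l i) * a i
        + ∑ l ∈ (F.C i).erase i, F.price m i l * a l := by
      simp only [Framework.tax, hgov', heta', hpfi]
      rw [halphal i (F.mem_C i)]
      have e1 : ∑ l ∈ (F.C i).erase i, F.price m' l i
          = ∑ l ∈ (F.C i).erase i, F.price m l i :=
        Finset.sum_congr rfl fun l _ => hpr1 l
      have e2 : ∑ l ∈ (F.C i).erase i, F.price m' i l * F.alpha m' l
          = ∑ l ∈ (F.C i).erase i, F.price m i l * a l :=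
        Finset.sum_congr rfl fun l hl => by
          rw [hpr2 l, halphal l (Finset.mem_of_mem_erase hl)]
      rw [e1, e2]
      have e3 : ∑ l ∈ (F.C i).erase i,
          msg.pP l * (msg.a l - F.aAvgMinus m' i l) ^ 2 = 0 := by
        refine Finset.sum_eq_zero fun l _ => ?_
        simp [hmsg]
      have e4 : msg.pG * (msg.aG - F.aGAvgMinus m' i) ^ 2 = 0 := by
        simp [hmsg]
      rw [e3, e4]
      ring
    have hvloc : F.v i (F.alpha m') = F.v i a := F.v_localized i _ a halphal
    have hdev : F.util (m.updPf i msg) i ≤ F.util m i := by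
      refine hdevP i msg ⟨by simp [hmsg], fun l => by simp [hmsg], by simp [hmsg]⟩ ?_ ?_ ?_
      · rw [← hm', hts']; exact hT'pos
      · rw [← hm', halphal i (F.mem_C i)]; exact ha i
      · rw [← hm', heta', halphal i (F.mem_C i)]
    rw [← hm'] at hdev
    have hutil' : F.util m' i = F.v i a - F.tax m' i := by
      rw [Framework.util, hvloc]
    rw [hutil', htax, hKEY0] at hdev
    linarith
  -- KEY3 : the cross payments cancel when summed over all platforms
  have hswap : ∀ f : Fin N → Fin N → ℝ,
      ∑ i, ∑ l ∈ (F.C i).erase i, f i l = ∑ l, ∑ i ∈ (F.C l).erase l, f i l := by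
    intro f
    refine Finset.sum_comm' fun x y => ?_
    simp only [Finset.mem_univ, true_and, and_true, Finset.mem_erase]
    constructor
    · rintro ⟨h1, h2⟩; exact ⟨fun h => h1 h.symm, (F.symm_C x y).mpr h2⟩
    · rintro ⟨h1, h2⟩; exact ⟨fun h => h1 h.symm, (F.symm_C y x).mpr h2⟩
  have hKEY3 : ∑ i, ((∑ l ∈ (F.C i).erase i, F.price m l i) * a i
      - ∑ l ∈ (F.C i).erase i, F.price m i l * a l) = 0 := by
    rw [Finset.sum_sub_distrib]
    have e1 : ∑ i, (∑ l ∈ (F.C i).erase i, F.price m l i) * a i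
        = ∑ i, ∑ l ∈ (F.C i).erase i, F.price m l i * a i :=
      Finset.sum_congr rfl fun i _ => Finset.sum_mul _ _ _
    rw [e1, hswap (fun i l => F.price m l i * a i), sub_eq_zero]
  -- summing the platform inequalities
  set H : ℝ := ∑ i, F.n i * F.h i (a i) with hH
  have hA : (∑ i, F.v i a) + π * H ≤ ∑ i, F.util m i := by
    have h1 := Finset.sum_le_sum fun i (_ : i ∈ Finset.univ) => hKEY1 i
    rw [Finset.sum_add_distrib, Finset.sum_add_distrib, hKEY3, ← Finset.mul_sum] at h1
    rw [hH]; linarith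
  have hU : ∑ i, F.util m i ≤ (∑ i, F.v i a) + t0 := by
    have h1 := Finset.sum_le_sum fun i (_ : i ∈ Finset.univ) => hdomP i
    rw [Finset.sum_sub_distrib] at h1
    have h2 : ∑ i, t i = -t0 := by linarith
    rw [h2] at h1; linarith
  have hπH : π * H ≤ t0 := by linarith
  have hπa0H : π * a0 ≤ π * H := mul_le_mul_of_nonneg_left ha0H hπ0
  have hbud : π * a0 ≤ F.b0 := by linarith
  -- KEY2 : government deviation to a0
  have hKEY2 : F.v0 a0 - π * a0 ≤ F.util0 m := by
    set g : GovMsg := ⟨π, ((N:ℝ)+1) * a0 - ∑ k, (m.pf k).aG⟩ with hg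
    have hα : F.alpha0 (m.updGov g) = a0 := by
      simp only [Framework.alpha0, Profile.updGov, hg]
      field_simp
      ring
    have hp : F.price0 (m.updGov g) = π := rfl
    have h1 : F.util0 (m.updGov g) ≤ F.util0 m := by
      refine hdevG g hπ0 ?_ ?_
      · rw [hα]; exact ⟨ha0.1, ha0.2⟩
      · rw [hp, hα]; exact hbud
    have h2 : F.util0 (m.updGov g) = F.v0 a0 - π * a0 := by
      have hpg : (m.updGov g).gov.pG = π := rfl
      simp only [Framework.util0, Framework.tax0, hp, hα, hpg]
      ring
    rw [h2] at h1; exact h1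
  have ht0le : t0 ≤ π * a0 := by linarith
  rcases hstrict with ⟨i0, hi0⟩ | hgov
  · have h1 : ∑ i, F.util m i < ∑ i, (F.v i a - t i) :=
      Finset.sum_lt_sum (fun i _ => hdomP i) ⟨i0, Finset.mem_univ i0, hi0⟩
    rw [Finset.sum_sub_distrib] at h1
    have h2 : ∑ i, t i = -t0 := by linarith
    rw [h2] at h1
    linarith
  · linarith

end MisinfoFilter
end
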